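/- Let D be a noncomplete metric space with quasihyperbolic metric k_D, and let γ be a quasihyperbolic geodesic from z₁ to x₀ in D. Suppose points y₁ = z₁, y₂, ..., y_{m+2} = x₀ are successive points on γ such that k_D(y_i, y_{i+1}) ≤ a₄ and ℓ(γ[y_i, y_{i+1}]) ≤ 2a₄·d_D(y_i) for all i, and d_D(y_{i+1}) = 2·d_D(y_i) for 1 ≤ i ≤ m+1. Then for every y ∈ γ[z₁, x₀], ℓ(γ[z₁, y]) ≤ 4a₄·e^{a₄}·d_D(y). -/

import Mathlib

open Set Metric

noncomputable section

variable {D : Type*} [MetricSpace D]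

/-- Distance from a point to the metric boundary `∂D = D̄ \ D`. -/
def dB (x : D) : ℝ :=
  Metric.infDist (x : UniformSpace.Completion D)
    ((Set.range ((↑) : D → UniformSpace.Completion D))ᶜ)

/-- A rectifiable curve from `x` to `y`, given in (1-Lipschitz) arclength
parametrization on `[0, L]`; `L` is its length. -/
structure Curve (D : Type*) [MetricSpace D] (x y : D) where
  L : ℝ
  hL : 0 ≤ L
  γ : ℝ → D
  lip : LipschitzOnWith 1 γ (Set.Icc 0 L)
  h0 : γ 0 = x
  h1 : γ L = y

/-- Quasihyperbolic length of the subarc with parameters in `[s,t]`. -/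
def Curve.qhLenOn {x y : D} (c : Curve D x y) (s t : ℝ) : ℝ :=
  ∫ u in s..t, 1 / dB (c.γ u)

/-- Quasihyperbolic length of a curve. -/
def Curve.qhLen {x y : D} (c : Curve D x y) : ℝ := c.qhLenOn 0 c.L

/-- The quasihyperbolic distance: infimum of quasihyperbolic lengths of curves. -/
def qhDist (x y : D) : ℝ := sInf {r : ℝ | ∃ c : Curve D x y, r = c.qhLen}

/-- Every pair of points is joined by a rectifiable curve. -/
def RectConnected (D : Type*) [MetricSpace D] : Prop :=
  ∀ x y : D, Nonempty (Curve D x y)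

/-- A length space: distance is the infimum of lengths of joining curves. -/
def IsLengthSpace (D : Type*) [MetricSpace D] : Prop :=
  ∀ x y : D, ∀ ε > 0, ∃ c : Curve D x y, c.L ≤ dist x y + ε

/-- A quasihyperbolic geodesic. -/
def Curve.IsQHGeodesic {x y : D} (c : Curve D x y) : Prop :=
  ∀ s t : ℝ, s ∈ Set.Icc 0 c.L → t ∈ Set.Icc 0 c.L → s ≤ t →
    c.qhLenOn s t = qhDist (c.γ s) (c.γ t)

/-- An `a`-cone arc: `min{ℓ(α[x,z]), ℓ(α[z,y])} ≤ a·d_D(z)` for all `z` on the arc. -/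
def Curve.IsConeArc {x y : D} (c : Curve D x y) (a : ℝ) : Prop :=
  ∀ t ∈ Set.Icc 0 c.L, min t (c.L - t) ≤ a * dB (c.γ t)

/-- A `(λ,μ)`-quasigeodesic with respect to the quasihyperbolic metric. -/
def Curve.IsQuasigeodesic {x y : D} (c : Curve D x y) (lam mu : ℝ) : Prop :=
  ∀ s t : ℝ, s ∈ Set.Icc 0 c.L → t ∈ Set.Icc 0 c.L → s ≤ t →
    c.qhLenOn s t ≤ lam * qhDist (c.γ s) (c.γ t) + mu

/-- An `a`-John space. -/
def IsJohn (D : Type*) [MetricSpace D] (a : ℝ) : Prop :=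
  ∀ x y : D, ∃ c : Curve D x y, c.IsConeArc a

/-- A `c`-uniform space. -/
def IsUniform (D : Type*) [MetricSpace D] (c : ℝ) : Prop :=
  ∀ x y : D, ∃ α : Curve D x y, α.L ≤ c * dist x y ∧ α.IsConeArc c

/-- Gromov product with respect to the quasihyperbolic metric. -/
def gromovProd (x y w : D) : ℝ := (qhDist x w + qhDist y w - qhDist x y) / 2

/-- `(D,k)` is Gromov `δ`-hyperbolic (four-point condition). -/
def QHHyperbolic (D : Type*) [MetricSpace D] (δ : ℝ) : Prop :=
  ∀ x y z w : D, min (gromovProd x y w) (gromovProd y z w) - δ ≤ gromovProd x z w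

/-- `(D,k)` is `K`-roughly starlike with respect to `w`. -/
def RoughlyStarlike (D : Type*) [MetricSpace D] (K : ℝ) (w : D) : Prop :=
  ∀ x : D, ∃ γ : ℝ → D, γ 0 = w ∧
    (∀ s t : ℝ, 0 ≤ s → 0 ≤ t → qhDist (γ s) (γ t) = |s - t|) ∧
    ∃ t : ℝ, 0 ≤ t ∧ qhDist x (γ t) ≤ K

/-- The `h`-coarse quasihyperbolic length of the part of the curve `β` with
parameters in `[s,t]`. -/
def coarseLen {E : Type*} [MetricSpace E] (β : ℝ → E) (s t h : ℝ) : ℝ :=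
  sSup {r : ℝ | ∃ n : ℕ, ∃ u : Fin (n + 1) → ℝ, Monotone u ∧
    (∀ i, u i ∈ Set.Icc s t) ∧
    (∀ i : Fin n, h ≤ qhDist (β (u i.castSucc)) (β (u i.succ))) ∧
    r = ∑ i : Fin n, qhDist (β (u i.castSucc)) (β (u i.succ))}

/-- `λ`-annular quasiconvexity. -/
def AnnularQuasiconvex (X : Type*) [MetricSpace X] (lam : ℝ) : Prop :=
  ∀ (x : X) (r r' : ℝ), 0 < r' → r' < r →
    ∀ y z : X, y ∈ Metric.ball x r \ Metric.ball x r' →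
      z ∈ Metric.ball x r \ Metric.ball x r' →
      ∃ c : Curve X y z, c.L ≤ lam * dist y z ∧
        ∀ t ∈ Set.Icc 0 c.L, c.γ t ∈ Metric.ball x (lam * r) \ Metric.ball x (r' / lam)

end

section Proof15

open MeasureTheory intervalIntegral Real Set

variable {D : Type*} [MetricSpace D]

lemma dB_nonneg' (x : D) : 0 ≤ dB x := Metric.infDist_nonneg

lemma dB_lipschitz' : LipschitzWith 1 (dB (D := D)) := by
  have h := Metric.lipschitz_infDist_pt
    ((Set.range ((↑) : D → UniformSpace.Completion D))ᶜ)
  have h2 := h.comp (UniformSpace.Completion.coe_isometry (α := D)).lipschitz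
  rw [mul_one] at h2
  exact h2

lemma dB_dist_le' (x y : D) : dB x ≤ dB y + dist x y := by
  have := dB_lipschitz'.dist_le_mul x y
  rw [NNReal.coe_one, one_mul, Real.dist_eq] at this
  have := abs_sub_le_iff.mp this
  linarith [this.1]

lemma qhLen_nonneg' {x y : D} (c : Curve D x y) : 0 ≤ c.qhLen :=
  intervalIntegral.integral_nonneg c.hL fun u _ => div_nonneg zero_le_one (dB_nonneg' _)

lemma qhDist_nonneg' (x y : D) : 0 ≤ qhDist x y := by
  apply Real.sInf_nonneg
  rintro r ⟨c, rfl⟩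
  exact qhLen_nonneg' c

lemma qhDist_le_qhLen' {x y : D} (c : Curve D x y) : qhDist x y ≤ c.qhLen :=
  csInf_le ⟨0, by rintro r ⟨c', rfl⟩; exact qhLen_nonneg' c'⟩ ⟨c, rfl⟩

/-- Key log estimate: for positive `g` with the one-sided Lipschitz bound towards `b`,
`log((g b + (b-a))/g b) ≤ ∫_a^b 1/g`. -/
lemma intlog' {g : ℝ → ℝ} {a b : ℝ} (hab : a ≤ b) (hcont : ContinuousOn g (Set.Icc a b))
    (hpos : ∀ u ∈ Set.Icc a b, 0 < g u) (hlip : ∀ u ∈ Set.Icc a b, g u ≤ g b + (b - u)) :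
    Real.log ((g b + (b - a)) / g b) ≤ ∫ u in a..b, 1 / g u := by
  have hgb : 0 < g b := hpos b ⟨hab, le_rfl⟩
  set c : ℝ := g b + b with hc
  have hcu : ∀ u ∈ Set.Icc a b, 0 < c - u := by
    intro u hu; have := hu.2; simp only [hc]; linarith
  have hint1 : IntervalIntegrable (fun u => (c - u)⁻¹) volume a b := by
    apply ContinuousOn.intervalIntegrable
    rw [Set.uIcc_of_le hab]
    exact (continuousOn_const.sub continuousOn_id).inv₀ fun u hu => (hcu u hu).ne'
  have hint2 : IntervalIntegrable (fun u => 1 / g u) volume a b := by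
    apply ContinuousOn.intervalIntegrable
    rw [Set.uIcc_of_le hab]
    exact continuousOn_const.div hcont fun u hu => (hpos u hu).ne'
  have hmono : (∫ u in a..b, (c - u)⁻¹) ≤ ∫ u in a..b, 1 / g u := by
    apply intervalIntegral.integral_mono_on hab hint1 hint2
    intro u hu
    rw [one_div]
    exact inv_anti₀ (hpos u hu) (by have := hlip u hu; simp only [hc]; linarith)
  have hcomp : (∫ u in a..b, (c - u)⁻¹) = Real.log ((c - a) / (c - b)) := by
    rw [intervalIntegral.integral_comp_sub_left (fun x : ℝ => x⁻¹) c]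
    exact integral_inv (notMem_uIcc_of_lt (hcu b ⟨hab, le_rfl⟩) (hcu a ⟨le_rfl, hab⟩))
  have heq : (g b + (b - a)) / g b = (c - a) / (c - b) := by
    simp only [hc]; ring_nf
  rw [heq]
  linarith [hmono, hcomp.symm.le]

/-- The "forward to `c` and back to `b`" curve along `γ`. -/
noncomputable def backCurve {z₁ x₀ : D} (γ : Curve D z₁ x₀) (b c : ℝ)
    (hb : 0 ≤ b) (hbc : b ≤ c) (hcL : c ≤ γ.L) : Curve D z₁ (γ.γ b) where
  L := 2 * c - b
  hL := by linarith
  γ := fun u => if u ≤ c then γ.γ u else γ.γ (2 * c - u)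
  lip := by
    have glip := lipschitzOnWith_iff_dist_le_mul.mp γ.lip
    have h0L : (0:ℝ) ≤ γ.L := γ.hL
    have gd : ∀ u v : ℝ, u ∈ Set.Icc 0 γ.L → v ∈ Set.Icc 0 γ.L →
        dist (γ.γ u) (γ.γ v) ≤ |u - v| := by
      intro u v hu hv
      have := glip u hu v hv
      rwa [NNReal.coe_one, one_mul, Real.dist_eq] at this
    have key : ∀ u v : ℝ, u ∈ Set.Icc 0 (2*c-b) → v ∈ Set.Icc 0 (2*c-b) → u ≤ v →
        dist (if u ≤ c then γ.γ u else γ.γ (2*c-u))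
          (if v ≤ c then γ.γ v else γ.γ (2*c-v)) ≤ v - u := by
      intro u v hu hv huv
      by_cases h1 : u ≤ c <;> by_cases h2 : v ≤ c
      · rw [if_pos h1, if_pos h2]
        have := gd u v ⟨hu.1, h1.trans hcL⟩ ⟨hv.1, h2.trans hcL⟩
        rwa [abs_of_nonpos (by linarith), neg_sub] at this
      · rw [if_pos h1, if_neg h2]
        push_neg at h2
        have hv2 : 2*c - v ∈ Set.Icc 0 γ.L := ⟨by linarith [hv.2], by linarith⟩
        calc dist (γ.γ u) (γ.γ (2*c-v))
            ≤ dist (γ.γ u) (γ.γ c) + dist (γ.γ c) (γ.γ (2*c-v)) := dist_triangle _ _ _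
          _ ≤ |u - c| + |c - (2*c-v)| :=
              add_le_add (gd u c ⟨hu.1, h1.trans hcL⟩ ⟨hb.trans hbc, hcL⟩)
                (gd c (2*c-v) ⟨hb.trans hbc, hcL⟩ hv2)
          _ ≤ v - u := by
              rw [abs_of_nonpos (by linarith), abs_of_nonneg (by linarith)]; linarith
      · exact absurd (huv.trans h2) h1
      · rw [if_neg h1, if_neg h2]
        push_neg at h1 h2
        have hu2 : 2*c - u ∈ Set.Icc 0 γ.L := ⟨by linarith [hu.2], by linarith⟩
        have hv2 : 2*c - v ∈ Set.Icc 0 γ.L := ⟨by linarith [hv.2], by linarith⟩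
        have := gd (2*c-u) (2*c-v) hu2 hv2
        rwa [show (2*c-u) - (2*c-v) = v - u by ring, abs_of_nonneg (by linarith)] at this
    rw [lipschitzOnWith_iff_dist_le_mul]
    intro u hu v hv
    rw [NNReal.coe_one, one_mul, Real.dist_eq]
    rcases le_total u v with h | h
    · rw [abs_of_nonpos (by linarith : u - v ≤ 0), neg_sub]
      exact key u v hu hv h
    · rw [abs_of_nonneg (by linarith : (0:ℝ) ≤ u - v), dist_comm]
      exact key v u hv hu h
  h0 := by beta_reduce; rw [if_pos (hb.trans hbc)]; exact γ.h0
  h1 := by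
    beta_reduce
    by_cases h : 2 * c - b ≤ c
    · rw [if_pos h]
      have hbceq : b = c := le_antisymm hbc (by linarith)
      congr 1; rw [hbceq]; ring
    · rw [if_neg h]; congr 1; ring

/-- If some point of a quasihyperbolic geodesic is at boundary distance `0`,
then so is its starting point. -/
lemma case1' {z₁ x₀ : D} (γ : Curve D z₁ x₀) (hgeo : γ.IsQHGeodesic)
    {u₀ : ℝ} (hu₀ : u₀ ∈ Set.Icc 0 γ.L) (hz : dB (γ.γ u₀) = 0) : dB z₁ = 0 := by
  by_contra hd
  set g : ℝ → ℝ := fun u => dB (γ.γ u) with hg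
  have hgnn : ∀ u, 0 ≤ g u := fun u => dB_nonneg' _
  have hd0 : 0 < g 0 := by
    have : g 0 = dB z₁ := by rw [hg]; simp [γ.h0]
    rw [this]
    exact (dB_nonneg' _).lt_of_ne (Ne.symm hd)
  have hlipOn : LipschitzOnWith 1 g (Set.Icc 0 γ.L) := by
    simpa [hg, Function.comp_def] using (dB_lipschitz'.comp_lipschitzOnWith γ.lip)
  have hgcont : ContinuousOn g (Set.Icc 0 γ.L) := hlipOn.continuousOn
  have hglip : ∀ u w : ℝ, u ∈ Set.Icc 0 γ.L → w ∈ Set.Icc 0 γ.L →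
      g u ≤ g w + |w - u| := by
    intro u w hu hw
    have h1 := lipschitzOnWith_iff_dist_le_mul.mp hlipOn u hu w hw
    rw [NNReal.coe_one, one_mul, Real.dist_eq, Real.dist_eq] at h1
    have h2 := (abs_sub_le_iff.mp h1).1
    rw [abs_sub_comm] at h2
    linarith
  -- first zero of g
  set S : Set ℝ := Set.Icc 0 γ.L ∩ g ⁻¹' {0} with hS
  have hSclosed : IsClosed S :=
    hgcont.preimage_isClosed_of_isClosed isClosed_Icc isClosed_singleton
  have hSne : S.Nonempty := ⟨u₀, hu₀, hz⟩
  have hSbdd : BddBelow S := ⟨0, fun u hu => hu.1.1⟩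
  set c₀ : ℝ := sInf S with hc₀
  have hc₀S : c₀ ∈ S := hSclosed.csInf_mem hSne hSbdd
  have hc₀Icc : c₀ ∈ Set.Icc 0 γ.L := hc₀S.1
  have hgc₀ : g c₀ = 0 := hc₀S.2
  have hc₀pos : 0 < c₀ := by
    rcases lt_or_eq_of_le hc₀Icc.1 with h | h
    · exact h
    · exfalso; rw [← h] at hgc₀; rw [hgc₀] at hd0; exact lt_irrefl 0 hd0
  have hgpos : ∀ u ∈ Set.Ico 0 c₀, 0 < g u := by
    intro u hu
    have hnot : u ∉ S := notMem_of_lt_csInf hu.2 hSbdd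
    have huL : u ∈ Set.Icc 0 γ.L := ⟨hu.1, hu.2.le.trans hc₀Icc.2⟩
    have : g u ≠ 0 := fun h => hnot ⟨huL, h⟩
    exact (hgnn u).lt_of_ne (Ne.symm this)
  -- the integral lower bound (★)
  have star : ∀ w ∈ Set.Ico 0 c₀,
      Real.log (g 0 / (c₀ - w)) ≤ ∫ u in (0:ℝ)..w, 1 / g u := by
    intro w hw
    have hwL : w ∈ Set.Icc 0 γ.L := ⟨hw.1, hw.2.le.trans hc₀Icc.2⟩
    have hIcc : Set.Icc 0 w ⊆ Set.Ico 0 c₀ :=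
      fun u hu => ⟨hu.1, lt_of_le_of_lt hu.2 hw.2⟩
    have hIccL : Set.Icc 0 w ⊆ Set.Icc 0 γ.L :=
      fun u hu => ⟨hu.1, hu.2.trans hwL.2⟩
    have h1 : Real.log ((g w + (w - 0)) / g w) ≤ ∫ u in (0:ℝ)..w, 1 / g u := by
      apply intlog' hw.1 (hgcont.mono hIccL) (fun u hu => hgpos u (hIcc hu))
      intro u hu
      have := hglip u w (hIccL hu) hwL
      rwa [abs_of_nonneg (by linarith [hu.2])] at this
    have hgw : 0 < g w := hgpos w hw
    have hcw : 0 < c₀ - w := by linarith [hw.2]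
    have h2 : g 0 / (c₀ - w) ≤ (g w + (w - 0)) / g w := by
      have e1 : g 0 ≤ g w + w := by
        have := hglip 0 w ⟨le_rfl, γ.hL⟩ hwL
        rwa [sub_zero, abs_of_nonneg hw.1] at this
      have e2 : g w ≤ c₀ - w := by
        have := hglip w c₀ hwL hc₀Icc
        rw [hgc₀, abs_of_nonneg (by linarith [hw.2])] at this
        linarith
      rw [div_le_div_iff₀ hcw hgw]
      nlinarith
    calc Real.log (g 0 / (c₀ - w)) ≤ Real.log ((g w + (w - 0)) / g w) := by
          apply Real.log_le_log (by positivity) h2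
      _ ≤ _ := h1
  -- the geodesic relation
  have hqd : ∀ w ∈ Set.Icc 0 γ.L, (∫ u in (0:ℝ)..w, 1 / g u) = qhDist z₁ (γ.γ w) := by
    intro w hw
    have := hgeo 0 w ⟨le_rfl, γ.hL⟩ hw hw.1
    rw [γ.h0] at this
    exact this
  -- cheat curve
  set v₀ : ℝ := c₀ / 2 with hv₀
  have hv₀0 : 0 ≤ v₀ := by positivity
  have hv₀c : v₀ ≤ c₀ := by linarith
  have hv₀lt : v₀ < c₀ := by linarith
  set bc : Curve D z₁ (γ.γ v₀) := backCurve γ v₀ c₀ hv₀0 hv₀c hc₀Icc.2 with hbc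
  have hbcL : bc.L = 2 * c₀ - v₀ := rfl
  have hbcγ : ∀ u : ℝ, u ≤ c₀ → bc.γ u = γ.γ u := by
    intro u hu
    show (if u ≤ c₀ then γ.γ u else γ.γ (2 * c₀ - u)) = γ.γ u
    rw [if_pos hu]
  have hQdef : bc.qhLen = ∫ u in (0:ℝ)..bc.L, 1 / dB (bc.γ u) := rfl
  by_cases hInt : IntervalIntegrable (fun u => 1 / dB (bc.γ u)) volume 0 bc.L
  · -- integrable case: integrals up to w are uniformly bounded, contradiction
    set Q : ℝ := bc.qhLen with hQ
    set w : ℝ := c₀ - min (c₀ / 2) (g 0 * Real.exp (-(Q + 1))) with hw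
    have hminpos : 0 < min (c₀ / 2) (g 0 * Real.exp (-(Q + 1))) := by
      apply lt_min (by positivity) (by positivity)
    have hwIco : w ∈ Set.Ico 0 c₀ := by
      constructor
      · have : min (c₀ / 2) (g 0 * Real.exp (-(Q + 1))) ≤ c₀ / 2 := min_le_left _ _
        simp only [hw]; linarith
      · simp only [hw]; linarith
    have hcw : c₀ - w ≤ g 0 * Real.exp (-(Q + 1)) := by
      simp only [hw]; simpa using min_le_right (c₀ / 2) (g 0 * Real.exp (-(Q + 1)))
    have hcwpos : 0 < c₀ - w := by simp only [hw]; simpa using hminpos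
    -- log lower bound
    have hlog : Q + 1 ≤ Real.log (g 0 / (c₀ - w)) := by
      have : Real.exp (Q + 1) ≤ g 0 / (c₀ - w) := by
        rw [le_div_iff₀ hcwpos]
        calc Real.exp (Q + 1) * (c₀ - w) ≤ Real.exp (Q + 1) * (g 0 * Real.exp (-(Q + 1))) := by
              apply mul_le_mul_of_nonneg_left hcw (Real.exp_pos _).le
          _ = g 0 * (Real.exp (Q + 1) * Real.exp (-(Q + 1))) := by ring
          _ = g 0 := by rw [Real.exp_neg, mul_inv_cancel₀ (Real.exp_ne_zero _), mul_one]
      calc Q + 1 = Real.log (Real.exp (Q + 1)) := (Real.log_exp _).symm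
        _ ≤ Real.log (g 0 / (c₀ - w)) := Real.log_le_log (Real.exp_pos _) this
    -- upper bound : ∫_0^w 1/g ≤ Q
    have hup : (∫ u in (0:ℝ)..w, 1 / g u) ≤ Q := by
      have heqint : (∫ u in (0:ℝ)..w, 1 / g u) = ∫ u in (0:ℝ)..w, 1 / dB (bc.γ u) := by
        apply intervalIntegral.integral_congr
        intro u hu
        rw [Set.uIcc_of_le hwIco.1] at hu
        beta_reduce
        rw [hbcγ u (hu.2.trans hwIco.2.le), hg]
      rw [heqint]
      have hmon : (∫ u in (0:ℝ)..w, 1 / dB (bc.γ u)) ≤ ∫ u in (0:ℝ)..bc.L, 1 / dB (bc.γ u) :=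
        intervalIntegral.integral_mono_interval le_rfl hwIco.1
          (by rw [hbcL]; linarith [hwIco.2, hv₀c])
          (Filter.Eventually.of_forall fun u => div_nonneg zero_le_one (dB_nonneg' _)) hInt
      exact hmon
    linarith [star w hwIco, hlog, hup]
  · -- non-integrable case : cheat curve has qh-length 0
    have hQ0 : bc.qhLen = 0 := by
      rw [hQdef]; exact intervalIntegral.integral_undef hInt
    have h1 : qhDist z₁ (γ.γ v₀) ≤ 0 := by
      have := qhDist_le_qhLen' bc
      rwa [hQ0] at this
    have hv₀Icc : v₀ ∈ Set.Icc 0 γ.L := ⟨hv₀0, hv₀c.trans hc₀Icc.2⟩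
    have hv₀Ico : v₀ ∈ Set.Ico 0 c₀ := ⟨hv₀0, hv₀lt⟩
    have h2 : 0 < qhDist z₁ (γ.γ v₀) := by
      rw [← hqd v₀ hv₀Icc]
      have hIccL : Set.Icc 0 v₀ ⊆ Set.Icc 0 γ.L := fun u hu => ⟨hu.1, hu.2.trans hv₀Icc.2⟩
      have hIcc : Set.Icc 0 v₀ ⊆ Set.Ico 0 c₀ := fun u hu => ⟨hu.1, lt_of_le_of_lt hu.2 hv₀lt⟩
      have hint : Real.log ((g v₀ + (v₀ - 0)) / g v₀) ≤ ∫ u in (0:ℝ)..v₀, 1 / g u := by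
        apply intlog' hv₀0 (hgcont.mono hIccL) (fun u hu => hgpos u (hIcc hu))
        intro u hu
        have := hglip u v₀ (hIccL hu) hv₀Icc
        rwa [abs_of_nonneg (by linarith [hu.2])] at this
      have hgv : 0 < g v₀ := hgpos v₀ hv₀Ico
      have hv₀pos : 0 < v₀ := by rw [hv₀]; positivity
      have : (0:ℝ) < Real.log ((g v₀ + (v₀ - 0)) / g v₀) := by
        apply Real.log_pos
        rw [lt_div_iff₀ hgv]
        linarith
      linarith
    linarith

end Proof15


/-- summation step in the proof of Theorem 1.5: if successive
points `y₁ = z₁, …, y_{m+2} = x₀` on a quasihyperbolic geodesic satisfy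
`k(yᵢ, yᵢ₊₁) ≤ a₄`, `ℓ(γ[yᵢ, yᵢ₊₁]) ≤ 2a₄·d_D(yᵢ)` and `d_D(yᵢ₊₁) = 2·d_D(yᵢ)`,
then `ℓ(γ[z₁, y]) ≤ 4a₄·e^{a₄}·d_D(y)` for every `y` on `γ`. -/
theorem stmt15 {D : Type*} [MetricSpace D] (hnc : ¬ CompleteSpace D)
    (a₄ : ℝ) (z₁ x₀ : D) (γ : Curve D z₁ x₀) (hgeo : γ.IsQHGeodesic)
    (m : ℕ) (tt : Fin (m + 2) → ℝ) (hmono : Monotone tt)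
    (h0 : tt 0 = 0) (hlast : tt (Fin.last (m + 1)) = γ.L)
    (hmem : ∀ i, tt i ∈ Set.Icc 0 γ.L)
    (hk : ∀ i : Fin (m + 1),
      qhDist (γ.γ (tt i.castSucc)) (γ.γ (tt i.succ)) ≤ a₄)
    (hlen : ∀ i : Fin (m + 1),
      tt i.succ - tt i.castSucc ≤ 2 * a₄ * dB (γ.γ (tt i.castSucc)))
    (hdb : ∀ i : Fin (m + 1),
      dB (γ.γ (tt i.succ)) = 2 * dB (γ.γ (tt i.castSucc))) :
    ∀ s ∈ Set.Icc 0 γ.L, s ≤ 4 * a₄ * Real.exp a₄ * dB (γ.γ s) := by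
  classical
  intro s hs
  have ha₄ : 0 ≤ a₄ := le_trans (qhDist_nonneg' _ _) (hk 0)
  set d₀ : ℝ := dB (γ.γ (tt 0)) with hd₀
  have hd₀nn : 0 ≤ d₀ := dB_nonneg' _
  have C1 : ∀ j : Fin (m + 2), dB (γ.γ (tt j)) = 2 ^ (j : ℕ) * d₀ := by
    intro j
    induction j using Fin.induction with
    | zero => simp [hd₀]
    | succ i ih =>
      rw [hdb i, ih, Fin.val_succ, Fin.coe_castSucc]
      ring
  have C2 : ∀ j : Fin (m + 2), tt j ≤ 2 * a₄ * d₀ * (2 ^ (j : ℕ) - 1) := by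
    intro j
    induction j using Fin.induction with
    | zero => simp [h0]
    | succ i ih =>
      have h1 := hlen i
      rw [C1 i.castSucc, Fin.coe_castSucc] at h1
      rw [Fin.coe_castSucc] at ih
      rw [Fin.val_succ]
      have : tt i.succ ≤ 2 * a₄ * d₀ * (2 ^ (i : ℕ) - 1) + 2 * a₄ * (2 ^ (i : ℕ) * d₀) := by
        linarith
      calc tt i.succ ≤ 2 * a₄ * d₀ * (2 ^ (i : ℕ) - 1) + 2 * a₄ * (2 ^ (i : ℕ) * d₀) := this
        _ = 2 * a₄ * d₀ * (2 ^ ((i : ℕ) + 1) - 1) := by rw [pow_succ]; ring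
  by_cases hzero : ∃ u ∈ Set.Icc 0 γ.L, dB (γ.γ u) = 0
  · -- degenerate case: the whole curve collapses
    obtain ⟨u₀, hu₀, hu₀z⟩ := hzero
    have hz₁ : dB z₁ = 0 := case1' γ hgeo hu₀ hu₀z
    have hd₀0 : d₀ = 0 := by rw [hd₀, h0, γ.h0]; exact hz₁
    have hL0 : γ.L ≤ 0 := by
      have := C2 (Fin.last (m + 1))
      rw [hlast, hd₀0] at this
      simpa using this
    have hs0 : s = 0 := le_antisymm (hs.2.trans hL0) hs.1
    rw [hs0]
    have := dB_nonneg' (γ.γ (0 : ℝ))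
    positivity
  · push_neg at hzero
    have hgpos : ∀ u ∈ Set.Icc 0 γ.L, 0 < dB (γ.γ u) :=
      fun u hu => (dB_nonneg' _).lt_of_ne (Ne.symm (hzero u hu))
    -- locate s between consecutive partition points
    have hex : ∃ i : Fin (m + 1), tt i.castSucc ≤ s ∧ s ≤ tt i.succ := by
      set A : Finset (Fin (m + 2)) := Finset.univ.filter (fun j => tt j ≤ s) with hA
      have hA0 : (0 : Fin (m + 2)) ∈ A := by
        simp only [hA, Finset.mem_filter, Finset.mem_univ, true_and]
        rw [h0]; exact hs.1
      have hAne : A.Nonempty := ⟨0, hA0⟩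
      set jm := A.max' hAne with hjm
      have hjmA : jm ∈ A := A.max'_mem hAne
      have hjs : tt jm ≤ s := by
        have := hjmA
        simp only [hA, Finset.mem_filter, Finset.mem_univ, true_and] at this
        exact this
      by_cases hlastc : (jm : ℕ) = m + 1
      · refine ⟨Fin.last m, ?_, ?_⟩
        · have hle : (Fin.last m).castSucc ≤ jm := by
            rw [Fin.le_def, Fin.coe_castSucc, Fin.val_last, hlastc]; omega
          exact le_trans (hmono hle) hjs
        · have : (Fin.last m).succ = Fin.last (m + 1) := by
            rw [Fin.succ_last]
          rw [this, hlast]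
          exact hs.2
      · have hlt : (jm : ℕ) < m + 1 := by
          have := jm.isLt; omega
        set i : Fin (m + 1) := ⟨(jm : ℕ), hlt⟩ with hi
        have hcast : i.castSucc = jm := by
          apply Fin.ext; simp [hi]
        refine ⟨i, by rw [hcast]; exact hjs, ?_⟩
        by_contra hcon
        push_neg at hcon
        have hmem' : i.succ ∈ A := by
          simp only [hA, Finset.mem_filter, Finset.mem_univ, true_and]
          exact hcon.le
        have hle := A.le_max' _ hmem'
        rw [← hjm, Fin.le_def, Fin.val_succ] at hle
        simp only [hi] at hle
        omega
    obtain ⟨i, hi1, hi2⟩ := hex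
    set ti : ℝ := tt i.castSucc with hti
    have htiL : ti ∈ Set.Icc 0 γ.L := hmem _
    have htsL : tt i.succ ∈ Set.Icc 0 γ.L := hmem _
    -- step 1 : s ≤ 4 a₄ dB(y_i)
    have hC := C1 i.castSucc
    rw [Fin.coe_castSucc] at hC
    have hb1 : s ≤ 4 * a₄ * dB (γ.γ ti) := by
      have h2 := C2 i.succ
      rw [Fin.val_succ] at h2
      have hp : (0:ℝ) ≤ 2 ^ (i : ℕ) := by positivity
      calc s ≤ tt i.succ := hi2
        _ ≤ 2 * a₄ * d₀ * (2 ^ ((i : ℕ) + 1) - 1) := h2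
        _ = 4 * a₄ * (2 ^ (i : ℕ) * d₀) - 2 * a₄ * d₀ := by rw [pow_succ]; ring
        _ ≤ 4 * a₄ * (2 ^ (i : ℕ) * d₀) := by nlinarith
        _ = 4 * a₄ * dB (γ.γ ti) := by rw [hC]
    -- step 2 : dB(y_i) ≤ exp a₄ * dB(γ s)
    have hgs : 0 < dB (γ.γ s) := hgpos s hs
    have hsub : Set.Icc ti s ⊆ Set.Icc 0 γ.L := Set.Icc_subset_Icc htiL.1 hs.2
    have hlipOn : LipschitzOnWith 1 (fun u => dB (γ.γ u)) (Set.Icc 0 γ.L) := by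
      simpa [Function.comp_def] using (dB_lipschitz'.comp_lipschitzOnWith γ.lip)
    have hglip : ∀ u w : ℝ, u ∈ Set.Icc 0 γ.L → w ∈ Set.Icc 0 γ.L →
        dB (γ.γ u) ≤ dB (γ.γ w) + |w - u| := by
      intro u w hu hw
      have h1 := lipschitzOnWith_iff_dist_le_mul.mp hlipOn u hu w hw
      rw [NNReal.coe_one, one_mul, Real.dist_eq, Real.dist_eq] at h1
      have h2 := (abs_sub_le_iff.mp h1).1
      rw [abs_sub_comm] at h2
      linarith
    have hlog : Real.log ((dB (γ.γ s) + (s - ti)) / dB (γ.γ s)) ≤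
        ∫ u in ti..s, 1 / dB (γ.γ u) := by
      apply intlog' hi1 (hlipOn.continuousOn.mono hsub) (fun u hu => hgpos u (hsub hu))
      intro u hu
      have := hglip u s (hsub hu) hs
      rwa [abs_of_nonneg (by linarith [hu.2])] at this
    have hintc : IntervalIntegrable (fun u => 1 / dB (γ.γ u)) MeasureTheory.volume ti (tt i.succ) := by
      apply ContinuousOn.intervalIntegrable
      rw [Set.uIcc_of_le (hi1.trans hi2)]
      have hsub2 : Set.Icc ti (tt i.succ) ⊆ Set.Icc 0 γ.L :=
        Set.Icc_subset_Icc htiL.1 htsL.2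
      exact continuousOn_const.div (hlipOn.continuousOn.mono hsub2)
        (fun u hu => (hgpos u (hsub2 hu)).ne')
    have hmonoInt : (∫ u in ti..s, 1 / dB (γ.γ u)) ≤ ∫ u in ti..(tt i.succ), 1 / dB (γ.γ u) :=
      intervalIntegral.integral_mono_interval le_rfl hi1 hi2
        (Filter.Eventually.of_forall fun u => div_nonneg zero_le_one (dB_nonneg' _)) hintc
    have hgeoeq : (∫ u in ti..(tt i.succ), 1 / dB (γ.γ u)) =
        qhDist (γ.γ ti) (γ.γ (tt i.succ)) :=
      hgeo ti (tt i.succ) htiL htsL (hi1.trans hi2)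
    have hqa : (∫ u in ti..(tt i.succ), 1 / dB (γ.γ u)) ≤ a₄ := by
      rw [hgeoeq]; exact hk i
    have hloga : Real.log ((dB (γ.γ s) + (s - ti)) / dB (γ.γ s)) ≤ a₄ :=
      le_trans hlog (le_trans hmonoInt hqa)
    have hratio : (dB (γ.γ s) + (s - ti)) / dB (γ.γ s) ≤ Real.exp a₄ := by
      have hpos : (0:ℝ) < (dB (γ.γ s) + (s - ti)) / dB (γ.γ s) := by
        apply div_pos (by linarith [hi1, hs.1]) hgs
      rw [← Real.exp_log hpos]
      exact Real.exp_le_exp.mpr hloga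
    have hkey : dB (γ.γ ti) ≤ Real.exp a₄ * dB (γ.γ s) := by
      have h1 : dB (γ.γ ti) ≤ dB (γ.γ s) + (s - ti) := by
        have := hglip ti s htiL hs
        rwa [abs_of_nonneg (by linarith)] at this
      rw [div_le_iff₀ hgs] at hratio
      linarith
    calc s ≤ 4 * a₄ * dB (γ.γ ti) := hb1
      _ ≤ 4 * a₄ * (Real.exp a₄ * dB (γ.γ s)) :=
          mul_le_mul_of_nonneg_left hkey (by linarith)
      _ = 4 * a₄ * Real.exp a₄ * dB (γ.γ s) := by ring
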